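/- For the lifting map I(C) = rowspace(I_r | C) sending an r×(n−r) matrix C over GF(q) to an r-dimensional subspace of GF(q)^n, one has d_S(I(C), I(D)) = 2·d_R(C, D) and d_I(I(C), I(D)) = d_R(C,D) for all r×(n−r) matrices C, D. In particular, the lifting map is injective and preserves distance distributions. -/

import Mathlib

/-- The subspace distance `d_S(U,V) = dim(U+V) - dim(U∩V)`. -/
noncomputable def dS {F M : Type} [Field F] [AddCommGroup M] [Module F M]
    (U V : Submodule F M) : ℕ :=
  Module.finrank F ↥(U ⊔ V) - Module.finrank F ↥(U ⊓ V)

/-- The injection distance `d_I(U,V) = max(dim U, dim V) - dim(U∩V)`. -/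
noncomputable def dI {F M : Type} [Field F] [AddCommGroup M] [Module F M]
    (U V : Submodule F M) : ℕ :=
  max (Module.finrank F ↥U) (Module.finrank F ↥V) - Module.finrank F ↥(U ⊓ V)

/-- The row space of a matrix: the span of its rows. -/
def rowSpace {F ι κ : Type} [Field F] (A : Matrix ι κ F) : Submodule F (κ → F) :=
  Submodule.span F (Set.range fun i => A i)

/-- The lifting of an `r × (n-r)` matrix `C`: the row space of `(I_r | C)`,
an `r`-dimensional subspace of `GF(q)^n` (with `GF(q)^n` realized as
`Fin r ⊕ Fin (n-r) → F`). -/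
def lift {F : Type} [Field F] {r k : ℕ} (C : Matrix (Fin r) (Fin k) F) :
    Submodule F (Fin r ⊕ Fin k → F) :=
  rowSpace (Matrix.fromCols (1 : Matrix (Fin r) (Fin r) F) C)

section Aux

open Matrix

variable {F : Type} [Field F] {r k : ℕ}

/-- The linear map whose range is `lift C`. -/
private def Lmap (C : Matrix (Fin r) (Fin k) F) :
    (Fin r → F) →ₗ[F] (Fin r ⊕ Fin k → F) :=
  (Matrix.fromCols (1 : Matrix (Fin r) (Fin r) F) C).vecMulLinear

private lemma Lmap_apply (C : Matrix (Fin r) (Fin k) F) (x : Fin r → F) :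
    Lmap C x = Sum.elim x (x ᵥ* C) := by
  simp [Lmap, Matrix.vecMul_fromCols]

private lemma lift_eq_range (C : Matrix (Fin r) (Fin k) F) :
    lift C = LinearMap.range (Lmap C) := by
  rw [lift, rowSpace, Lmap, range_vecMulLinear]
  rfl

private lemma Lmap_injective (C : Matrix (Fin r) (Fin k) F) :
    Function.Injective (Lmap C) := by
  rw [← LinearMap.ker_eq_bot]
  ext x
  simp only [LinearMap.mem_ker, Submodule.mem_bot]
  constructor
  · intro h
    have : ∀ i, Lmap C x (Sum.inl i) = 0 := fun i => by rw [h]; rfl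
    funext i
    simpa [Lmap_apply] using this i
  · rintro rfl; exact map_zero _

private lemma finrank_lift (C : Matrix (Fin r) (Fin k) F) :
    Module.finrank F ↥(lift C) = r := by
  rw [lift_eq_range, LinearMap.finrank_range_of_inj (Lmap_injective C)]
  simp

private lemma inf_lift (C D : Matrix (Fin r) (Fin k) F) :
    lift C ⊓ lift D = Submodule.map (Lmap C) (LinearMap.ker (C - D).vecMulLinear) := by
  ext y
  simp only [Submodule.mem_inf, lift_eq_range, LinearMap.mem_range, Submodule.mem_map,
    LinearMap.mem_ker, Matrix.vecMulLinear_apply]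
  constructor
  · rintro ⟨⟨x, rfl⟩, ⟨z, hz⟩⟩
    have hxz : z = x := by
      funext i
      have := congrFun hz (Sum.inl i)
      simpa [Lmap_apply] using this
    subst hxz
    refine ⟨z, ?_, rfl⟩
    have : z ᵥ* D = z ᵥ* C := by
      funext j
      have := congrFun hz (Sum.inr j)
      simpa [Lmap_apply] using this
    rw [Matrix.vecMul_sub, this, sub_self]
  · rintro ⟨x, hx, rfl⟩
    refine ⟨⟨x, rfl⟩, ⟨x, ?_⟩⟩
    have : x ᵥ* C = x ᵥ* D := by
      have := Matrix.vecMul_sub C D x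
      rw [hx] at this
      linear_combination (norm := module) -this
    rw [Lmap_apply, Lmap_apply, this]

private lemma finrank_inf (C D : Matrix (Fin r) (Fin k) F) :
    Module.finrank F ↥(lift C ⊓ lift D) = r - (C - D).rank ∧ (C - D).rank ≤ r := by
  have hker : LinearMap.ker (C - D).vecMulLinear = LinearMap.ker (C - D)ᵀ.mulVecLin := by
    ext x
    simp only [LinearMap.mem_ker, Matrix.vecMulLinear_apply, Matrix.mulVecLin_apply,
      Matrix.mulVec_transpose]
  have hrn := LinearMap.finrank_range_add_finrank_ker ((C - D)ᵀ.mulVecLin)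
  have hrank : Module.finrank F (LinearMap.range (C - D)ᵀ.mulVecLin) = (C - D).rank := by
    rw [← Matrix.rank, Matrix.rank_transpose]
  rw [hrank, Module.finrank_fintype_fun_eq_card, Fintype.card_fin] at hrn
  have hmap : Module.finrank F ↥(lift C ⊓ lift D)
      = Module.finrank F (LinearMap.ker (C - D).vecMulLinear) := by
    rw [inf_lift]
    exact (LinearEquiv.finrank_eq
      (Submodule.equivMapOfInjective _ (Lmap_injective C) _)).symm
  constructor
  · rw [hmap, hker]; omega
  · omega

end Aux

theorem stmt10 (F : Type) [Field F] [Fintype F] (r k : ℕ) :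
    (∀ C D : Matrix (Fin r) (Fin k) F,
      dS (lift C) (lift D) = 2 * (C - D).rank ∧ dI (lift C) (lift D) = (C - D).rank) ∧
    Function.Injective (lift (F := F) (r := r) (k := k)) := by
  have main : ∀ C D : Matrix (Fin r) (Fin k) F,
      dS (lift C) (lift D) = 2 * (C - D).rank ∧ dI (lift C) (lift D) = (C - D).rank := by
    intro C D
    obtain ⟨hinf, hle⟩ := finrank_inf C D
    have hsup := Submodule.finrank_sup_add_finrank_inf_eq (lift C) (lift D)
    rw [finrank_lift, finrank_lift, hinf] at hsup
    constructor
    · rw [dS, hinf]; omega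
    · rw [dI, finrank_lift, finrank_lift, hinf]; omega
  refine ⟨main, ?_⟩
  intro C D h
  have hd := (main C D).2
  rw [h, dI, inf_idem, finrank_lift] at hd
  have hr : (C - D).rank = 0 := by omega
  have hbot : LinearMap.range (C - D).mulVecLin = ⊥ := by
    rw [Matrix.rank] at hr
    exact Submodule.finrank_eq_zero.mp hr
  have hzero : C - D = 0 := by
    ext i j
    have : (C - D).mulVecLin (Pi.single j 1) = 0 := by
      rw [← Submodule.mem_bot (R := F), ← hbot]
      exact LinearMap.mem_range_self _ _
    have := congrFun this i
    simpa [Matrix.mulVecLin_apply, Matrix.mulVec_single] using this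
  exact sub_eq_zero.mp hzero
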